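/- For k ∈ (0,1), ∫_{−K}^{K} [(K·E(z,k) − E·z)·dn z − k²·K·sn z·cn z]·sn z·cn z dz = −(1/k²)·(E² + (k²−1)K²), which is nonzero; hence the equation L₊g = φ has no periodic solution. -/

import Mathlib

open MeasureTheory
open Set

/-- Complete elliptic integral of the first kind. -/
noncomputable def ellipticK (k : ℝ) : ℝ :=
  ∫ θ in (0:ℝ)..(Real.pi / 2), 1 / Real.sqrt (1 - k ^ 2 * Real.sin θ ^ 2)

/-- Complete elliptic integral of the second kind. -/
noncomputable def ellipticE (k : ℝ) : ℝ :=
  ∫ θ in (0:ℝ)..(Real.pi / 2), Real.sqrt (1 - k ^ 2 * Real.sin θ ^ 2)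

/-- The operator L₋f = −f'' − (2 dn²z + k² − 2)f. -/
noncomputable def Lm (k : ℝ) (dn : ℝ → ℝ) (f : ℝ → ℝ) : ℝ → ℝ :=
  fun z => -(deriv (deriv f) z) - (2 * dn z ^ 2 + k ^ 2 - 2) * f z

/-- The operator L₊f = −f'' − (6 dn²z + k² − 2)f. -/
noncomputable def Lp (k : ℝ) (dn : ℝ → ℝ) (f : ℝ → ℝ) : ℝ → ℝ :=
  fun z => -(deriv (deriv f) z) - (6 * dn z ^ 2 + k ^ 2 - 2) * f z

lemma even_integral_neg (f : ℝ → ℝ) (hf : ∀ x, f (-x) = f x) (c : ℝ) :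
    ∫ t in (0:ℝ)..(-c), f t = - ∫ t in (0:ℝ)..c, f t := by
  have h := intervalIntegral.integral_comp_neg f (a := 0) (b := c)
  simp only [hf, neg_zero] at h
  rw [intervalIntegral.integral_symm, ← h]

lemma sq_ineq_aux (a b c : ℝ) (hc : 0 ≤ c) (h : Real.sqrt c * b < a) (hb : 0 ≤ b) :
    0 < a ^ 2 - c * b ^ 2 := by
  have h1 : 0 ≤ Real.sqrt c * b := mul_nonneg (Real.sqrt_nonneg _) hb
  have h2 : Real.sqrt c ^ 2 = c := Real.sq_sqrt hc
  nlinarith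

set_option maxHeartbeats 1000000 in
/-- ⟨φ, sn·cn⟩ = −(1/k²)(E² + (k²−1)K²) ≠ 0, hence L₊g = φ has no
periodic solution. -/
theorem stmt_8 (k : ℝ) (hk0 : 0 < k) (hk1 : k < 1)
    (sn cn dn : ℝ → ℝ)
    (hsn0 : sn 0 = 0) (hcn0 : cn 0 = 1) (hdn0 : dn 0 = 1)
    (hsn' : ∀ z, HasDerivAt sn (cn z * dn z) z)
    (hcn' : ∀ z, HasDerivAt cn (-(sn z * dn z)) z)
    (hdn' : ∀ z, HasDerivAt dn (-(k ^ 2 * sn z * cn z)) z)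
    (φ : ℝ → ℝ)
    (hφ : ∀ z, φ z = (ellipticK k * (∫ y in (0:ℝ)..z, dn y ^ 2) - ellipticE k * z) * dn z
      - k ^ 2 * ellipticK k * sn z * cn z) :
    (∫ z in (-ellipticK k)..(ellipticK k), φ z * (sn z * cn z)
        = -(1 / k ^ 2) * (ellipticE k ^ 2 + (k ^ 2 - 1) * ellipticK k ^ 2)) ∧
    (∫ z in (-ellipticK k)..(ellipticK k), φ z * (sn z * cn z)) ≠ 0 ∧
    ¬ ∃ g : ℝ → ℝ, ContDiff ℝ 2 g ∧ (∀ z, g (z + 2 * ellipticK k) = g z) ∧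
        ∀ z, Lp k dn g z = φ z := by
  -- pythagorean identities
  have hsc : ∀ z, sn z ^ 2 + cn z ^ 2 = 1 := by
    have hd : ∀ z, HasDerivAt (fun z => sn z ^ 2 + cn z ^ 2) 0 z := by
      intro z
      have := (((hsn' z).pow 2).add ((hcn' z).pow 2))
      refine this.congr_deriv ?_
      ring
    intro z
    have := is_const_of_deriv_eq_zero (fun z => (hd z).differentiableAt)
      (fun z => (hd z).deriv) z 0
    simpa [hsn0, hcn0] using this
  have hds : ∀ z, dn z ^ 2 + k ^ 2 * sn z ^ 2 = 1 := by
    have hd : ∀ z, HasDerivAt (fun z => dn z ^ 2 + k ^ 2 * sn z ^ 2) 0 z := by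
      intro z
      have := (((hdn' z).pow 2).add (((hsn' z).pow 2).const_mul (k ^ 2)))
      refine this.congr_deriv ?_
      ring
    intro z
    have := is_const_of_deriv_eq_zero (fun z => (hd z).differentiableAt)
      (fun z => (hd z).deriv) z 0
    simpa [hsn0, hdn0] using this
  have hsb : ∀ z, |sn z| ≤ 1 := by
    intro z; rw [abs_le]; constructor <;> nlinarith [sq_nonneg (cn z), hsc z]
  have hcb : ∀ z, |cn z| ≤ 1 := by
    intro z; rw [abs_le]; constructor <;> nlinarith [sq_nonneg (sn z), hsc z]
  have hdb : ∀ z, |dn z| ≤ 1 := by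
    intro z; rw [abs_le]; constructor <;> nlinarith [sq_nonneg (sn z), hds z, sq_nonneg k]
  set u : ℝ → ℝ := fun θ => 1 - k ^ 2 * Real.sin θ ^ 2 with hu_def
  set d : ℝ → ℝ := fun θ => Real.sqrt (1 - k ^ 2 * Real.sin θ ^ 2) with hd_def
  set w : ℝ → ℝ := fun θ => 1 / Real.sqrt (1 - k ^ 2 * Real.sin θ ^ 2) with hw_def
  have hk2 : 0 < 1 - k ^ 2 := by nlinarith
  have hu_lb : ∀ θ, 1 - k ^ 2 ≤ u θ := by
    intro θ; simp only [hu_def]; nlinarith [Real.sin_sq_le_one θ, sq_nonneg (Real.sin θ), sq_nonneg k]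
  have hu_ub : ∀ θ, u θ ≤ 1 := by
    intro θ; simp only [hu_def]; nlinarith [sq_nonneg (Real.sin θ), sq_nonneg k, sq_nonneg (k * Real.sin θ)]
  have hu_pos : ∀ θ, 0 < u θ := fun θ => lt_of_lt_of_le hk2 (hu_lb θ)
  have hd_pos : ∀ θ, 0 < d θ := fun θ => Real.sqrt_pos.mpr (hu_pos θ)
  have hd_ub : ∀ θ, d θ ≤ 1 := by
    intro θ
    exact Real.sqrt_le_one.mpr (hu_ub θ)
  have hdw : ∀ θ, d θ * w θ = 1 := by
    intro θ
    rw [hw_def, hd_def]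
    field_simp
    exact div_self (Real.sqrt_pos.mpr (hu_pos θ)).ne'
  have hw_pos : ∀ θ, 0 < w θ := by
    intro θ; exact div_pos one_pos (hd_pos θ)
  have hw_ub : ∀ θ, w θ ≤ 1 / Real.sqrt (1 - k ^ 2) := by
    intro θ
    apply div_le_div_of_nonneg_left one_pos.le (Real.sqrt_pos.mpr hk2)
    exact Real.sqrt_le_sqrt (hu_lb θ)
  have hu_cont : Continuous u := by fun_prop
  have hd_cont : Continuous d := by fun_prop
  have hw_cont : Continuous w := by
    apply Continuous.div continuous_const hd_cont
    intro θ; exact (hd_pos θ).ne'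
  have hd' : ∀ θ, HasDerivAt d (-(k ^ 2 * Real.sin θ * Real.cos θ) * w θ) θ := by
    intro θ
    have hu' : HasDerivAt u (-(k ^ 2 * (2 * Real.sin θ * Real.cos θ))) θ := by
      have := (((Real.hasDerivAt_sin θ).pow 2).const_mul (k ^ 2)).const_sub 1
      refine this.congr_deriv ?_
      ring
    have := (Real.hasDerivAt_sqrt (hu_pos θ).ne').comp θ hu'
    refine this.congr_deriv ?_
    rw [hw_def]
    field_simp
    ring
  set G : ℝ → ℝ := fun θ => ∫ t in (0:ℝ)..θ, w t with hG_def
  have hG' : ∀ θ, HasDerivAt G (w θ) θ := by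
    intro θ
    exact intervalIntegral.integral_hasDerivAt_right (hw_cont.intervalIntegrable _ _)
      (hw_cont.stronglyMeasurableAtFilter _ _) hw_cont.continuousAt
  have hG0 : G 0 = 0 := by simp [hG_def]
  have hGK : G (Real.pi / 2) = ellipticK k := by rw [hG_def, hw_def, ellipticK]
  -- === ODE uniqueness chunk ===
  set Y : ℝ → ℝ × ℝ × ℝ := fun θ => (sn (G θ), cn (G θ), dn (G θ)) with hY_def
  set y : ℝ → ℝ × ℝ × ℝ := fun θ => (Real.sin θ, Real.cos θ, d θ) with hy_def
  set v : ℝ → ℝ × ℝ × ℝ → ℝ × ℝ × ℝ :=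
    fun θ x => w θ • (x.2.1 * x.2.2, -(x.1 * x.2.2), -(k ^ 2 * x.1 * x.2.1)) with hv_def
  set L : NNReal := Real.toNNReal (2 / Real.sqrt (1 - k ^ 2)) with hL_def
  have hLcoe : (L : ℝ) = 2 / Real.sqrt (1 - k ^ 2) := by
    rw [hL_def, Real.coe_toNNReal]
    positivity
  have key : ∀ a b a' b' : ℝ, |a| ≤ 1 → |b'| ≤ 1 → |a * b - a' * b'| ≤ |b - b'| + |a - a'| := by
    intro a b a' b' ha hb
    calc |a * b - a' * b'| = |a * (b - b') + b' * (a - a')| := by ring_nf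
      _ ≤ |a * (b - b')| + |b' * (a - a')| := abs_add_le _ _
      _ = |a| * |b - b'| + |b'| * |a - a'| := by rw [abs_mul, abs_mul]
      _ ≤ 1 * |b - b'| + 1 * |a - a'| := by gcongr
      _ = |b - b'| + |a - a'| := by ring
  have hLip : ∀ θ, LipschitzOnWith L (v θ) (Metric.closedBall (0 : ℝ × ℝ × ℝ) 1) := by
    intro θ
    rw [lipschitzOnWith_iff_dist_le_mul]
    intro p hp q hq
    have hpm : ‖p‖ ≤ 1 := by rwa [Metric.mem_closedBall, dist_zero_right] at hp
    have hqm : ‖q‖ ≤ 1 := by rwa [Metric.mem_closedBall, dist_zero_right] at hq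
    have bp1 : |p.1| ≤ 1 := by
      have := (norm_fst_le p).trans hpm; rwa [Real.norm_eq_abs] at this
    have bp2 : |p.2.1| ≤ 1 := by
      have := (norm_fst_le p.2).trans ((norm_snd_le p).trans hpm)
      rwa [Real.norm_eq_abs] at this
    have bp3 : |p.2.2| ≤ 1 := by
      have := (norm_snd_le p.2).trans ((norm_snd_le p).trans hpm)
      rwa [Real.norm_eq_abs] at this
    have bq1 : |q.1| ≤ 1 := by
      have := (norm_fst_le q).trans hqm; rwa [Real.norm_eq_abs] at this
    have bq2 : |q.2.1| ≤ 1 := by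
      have := (norm_fst_le q.2).trans ((norm_snd_le q).trans hqm)
      rwa [Real.norm_eq_abs] at this
    have bq3 : |q.2.2| ≤ 1 := by
      have := (norm_snd_le q.2).trans ((norm_snd_le q).trans hqm)
      rwa [Real.norm_eq_abs] at this
    have dfst : ∀ (a b : ℝ × ℝ × ℝ), dist a.1 b.1 ≤ dist a b := fun a b => by
      rw [Prod.dist_eq]; exact le_max_left _ _
    have dsnd : ∀ (a b : ℝ × ℝ × ℝ), dist a.2 b.2 ≤ dist a b := fun a b => by
      rw [Prod.dist_eq]; exact le_max_right _ _
    have dfst2 : ∀ (a b : ℝ × ℝ), dist a.1 b.1 ≤ dist a b := fun a b => by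
      rw [Prod.dist_eq]; exact le_max_left _ _
    have dsnd2 : ∀ (a b : ℝ × ℝ), dist a.2 b.2 ≤ dist a b := fun a b => by
      rw [Prod.dist_eq]; exact le_max_right _ _
    have hd1 : |p.1 - q.1| ≤ dist p q := by
      have := dfst p q; rwa [Real.dist_eq] at this
    have hd2 : |p.2.1 - q.2.1| ≤ dist p q := by
      have := (dfst2 p.2 q.2).trans (dsnd p q); rwa [Real.dist_eq] at this
    have hd3 : |p.2.2 - q.2.2| ≤ dist p q := by
      have := (dsnd2 p.2 q.2).trans (dsnd p q); rwa [Real.dist_eq] at this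
    have e1 : dist (p.2.1 * p.2.2) (q.2.1 * q.2.2) ≤ 2 * dist p q := by
      rw [Real.dist_eq]
      calc |p.2.1 * p.2.2 - q.2.1 * q.2.2| ≤ |p.2.2 - q.2.2| + |p.2.1 - q.2.1| :=
            key _ _ _ _ bp2 bq3
        _ ≤ dist p q + dist p q := add_le_add hd3 hd2
        _ = 2 * dist p q := by ring
    have e2 : dist (-(p.1 * p.2.2)) (-(q.1 * q.2.2)) ≤ 2 * dist p q := by
      rw [dist_neg_neg, Real.dist_eq]
      calc |p.1 * p.2.2 - q.1 * q.2.2| ≤ |p.2.2 - q.2.2| + |p.1 - q.1| := key _ _ _ _ bp1 bq3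
        _ ≤ dist p q + dist p q := add_le_add hd3 hd1
        _ = 2 * dist p q := by ring
    have e3 : dist (-(k ^ 2 * p.1 * p.2.1)) (-(k ^ 2 * q.1 * q.2.1)) ≤ 2 * dist p q := by
      rw [dist_neg_neg, Real.dist_eq]
      have hka : |k ^ 2 * p.1| ≤ 1 := by
        rw [abs_mul, abs_of_nonneg (sq_nonneg k)]
        nlinarith only [abs_nonneg p.1, bp1, hk0, hk1]
      calc |k ^ 2 * p.1 * p.2.1 - k ^ 2 * q.1 * q.2.1|
          = |(k ^ 2 * p.1) * p.2.1 - (k ^ 2 * q.1) * q.2.1| := by ring_nf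
        _ ≤ |p.2.1 - q.2.1| + |k ^ 2 * p.1 - k ^ 2 * q.1| := key _ _ _ _ hka bq2
        _ = |p.2.1 - q.2.1| + k ^ 2 * |p.1 - q.1| := by
            rw [← mul_sub, abs_mul, abs_of_nonneg (sq_nonneg k)]
        _ ≤ dist p q + 1 * |p.1 - q.1| := by
            have : k ^ 2 ≤ 1 := by nlinarith only [hk0, hk1]
            gcongr
        _ ≤ dist p q + dist p q := by rw [one_mul]; exact add_le_add le_rfl hd1
        _ = 2 * dist p q := by ring
    have hNb : dist ((p.2.1 * p.2.2, -(p.1 * p.2.2), -(k ^ 2 * p.1 * p.2.1)) : ℝ × ℝ × ℝ)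
        ((q.2.1 * q.2.2, -(q.1 * q.2.2), -(k ^ 2 * q.1 * q.2.1))) ≤ 2 * dist p q := by
      rw [Prod.dist_eq, Prod.dist_eq]
      exact max_le e1 (max_le e2 e3)
    have hsm : dist (v θ p) (v θ q)
        = w θ * dist ((p.2.1 * p.2.2, -(p.1 * p.2.2), -(k ^ 2 * p.1 * p.2.1)) : ℝ × ℝ × ℝ)
          ((q.2.1 * q.2.2, -(q.1 * q.2.2), -(k ^ 2 * q.1 * q.2.1))) := by
      rw [hv_def]
      simp only []
      rw [dist_smul₀, Real.norm_eq_abs, abs_of_pos (hw_pos θ)]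
    calc dist (v θ p) (v θ q)
        = w θ * dist ((p.2.1 * p.2.2, -(p.1 * p.2.2), -(k ^ 2 * p.1 * p.2.1)) : ℝ × ℝ × ℝ)
          ((q.2.1 * q.2.2, -(q.1 * q.2.2), -(k ^ 2 * q.1 * q.2.1))) := hsm
      _ ≤ (1 / Real.sqrt (1 - k ^ 2)) * (2 * dist p q) := by
          apply mul_le_mul (hw_ub θ) hNb dist_nonneg
          positivity
      _ = L * dist p q := by rw [hLcoe]; ring
  have hYc : Continuous Y := by
    have : ∀ θ, ContinuousAt Y θ := by
      intro θ
      have h1 := ((hsn' (G θ)).comp θ (hG' θ)).continuousAt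
      have h2 := ((hcn' (G θ)).comp θ (hG' θ)).continuousAt
      have h3 := ((hdn' (G θ)).comp θ (hG' θ)).continuousAt
      exact h1.prodMk (h2.prodMk h3)
    exact continuous_iff_continuousAt.mpr this
  have hY' : ∀ θ, HasDerivAt Y (v θ (Y θ)) θ := by
    intro θ
    have h1 := (hsn' (G θ)).comp θ (hG' θ)
    have h2 := (hcn' (G θ)).comp θ (hG' θ)
    have h3 := (hdn' (G θ)).comp θ (hG' θ)
    have := h1.prodMk (h2.prodMk h3)
    refine this.congr_deriv ?_
    rw [hv_def, hY_def]
    simp only [Prod.smul_mk, smul_eq_mul, Prod.mk.injEq]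
    refine ⟨by ring, by ring, by ring⟩
  have hy' : ∀ θ, HasDerivAt y (v θ (y θ)) θ := by
    intro θ
    have h1 := Real.hasDerivAt_sin θ
    have h2 := Real.hasDerivAt_cos θ
    have h3 := hd' θ
    have := h1.prodMk (h2.prodMk h3)
    refine this.congr_deriv (Eq.symm ?_)
    rw [hv_def, hy_def]
    simp only [Prod.smul_mk, smul_eq_mul, Prod.mk.injEq]
    have hwd := hdw θ
    refine ⟨by linear_combination Real.cos θ * hwd, by linear_combination -Real.sin θ * hwd, by ring⟩
  have hYmem : ∀ θ, Y θ ∈ Metric.closedBall (0 : ℝ × ℝ × ℝ) 1 := by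
    intro θ
    rw [Metric.mem_closedBall, dist_zero_right, Prod.norm_def, Prod.norm_def]
    refine max_le ?_ (max_le ?_ ?_) <;> rw [Real.norm_eq_abs]
    · exact hsb _
    · exact hcb _
    · exact hdb _
  have hymem : ∀ θ, y θ ∈ Metric.closedBall (0 : ℝ × ℝ × ℝ) 1 := by
    intro θ
    rw [Metric.mem_closedBall, dist_zero_right, Prod.norm_def, Prod.norm_def]
    refine max_le ?_ (max_le ?_ ?_) <;> rw [Real.norm_eq_abs]
    · exact Real.abs_sin_le_one θ
    · exact Real.abs_cos_le_one θ
    · rw [abs_of_pos (hd_pos θ)]; exact hd_ub θ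
  have hy0 : Y 0 = y 0 := by
    rw [hY_def, hy_def]
    simp only [hG0, hsn0, hcn0, hdn0, Real.sin_zero, Real.cos_zero]
    norm_num [hd_def]
  have heqON : Set.EqOn Y y (Icc (-2 : ℝ) 2) := by
    refine ODE_solution_unique_of_mem_Icc (fun t _ => hLip t) (by norm_num : (0:ℝ) ∈ Ioo (-2:ℝ) 2)
      hYc.continuousOn (fun t _ => hY' t) (fun t _ => hYmem t)
      ?_ (fun t _ => hy' t) (fun t _ => hymem t) hy0
    · fun_prop
  have hpi2 : Real.pi / 2 ∈ Icc (-2 : ℝ) 2 := by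
    constructor
    · nlinarith only [Real.pi_pos]
    · nlinarith only [Real.pi_le_four]
  have hpi2' : -(Real.pi / 2) ∈ Icc (-2 : ℝ) 2 := by
    constructor
    · nlinarith only [Real.pi_le_four]
    · nlinarith only [Real.pi_pos]
  have hval1 := heqON hpi2
  have hval2 := heqON hpi2'
  rw [hY_def, hy_def, Prod.ext_iff, Prod.ext_iff] at hval1 hval2
  simp only [] at hval1 hval2
  -- G (-(π/2)) = -ellipticK k
  have hGKneg : G (-(Real.pi / 2)) = -ellipticK k := by
    have heven : ∀ x : ℝ, w (-x) = w x := by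
      intro x; rw [hw_def]; simp [Real.sin_neg]
    have h := even_integral_neg w heven (Real.pi / 2)
    rw [hG_def]
    simp only []
    rw [h]
    exact congrArg Neg.neg hGK
  have KK := ellipticK k
  have hsnK : sn (ellipticK k) = 1 := by
    rw [← hGK]; rw [hval1.1, Real.sin_pi_div_two]
  have hcnK : cn (ellipticK k) = 0 := by
    rw [← hGK]; rw [hval1.2.1, Real.cos_pi_div_two]
  have hdnK : dn (ellipticK k) = Real.sqrt (1 - k ^ 2) := by
    rw [← hGK]; rw [hval1.2.2, hd_def]
    simp [Real.sin_pi_div_two]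
  have hsnK' : sn (-ellipticK k) = -1 := by
    rw [← hGKneg]; rw [hval2.1, Real.sin_neg, Real.sin_pi_div_two]
  have hcnK' : cn (-ellipticK k) = 0 := by
    rw [← hGKneg]; rw [hval2.2.1, Real.cos_neg, Real.cos_pi_div_two]
  have hdnK' : dn (-ellipticK k) = Real.sqrt (1 - k ^ 2) := by
    rw [← hGKneg]; rw [hval2.2.2, hd_def]
    simp [Real.sin_neg, Real.sin_pi_div_two]
  have hsn_cont : Continuous sn := continuous_iff_continuousAt.2 fun z => (hsn' z).continuousAt
  have hcn_cont : Continuous cn := continuous_iff_continuousAt.2 fun z => (hcn' z).continuousAt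
  have hdn_cont : Continuous dn := continuous_iff_continuousAt.2 fun z => (hdn' z).continuousAt
  have hdnG : ∀ x ∈ Icc (-2:ℝ) 2, dn (G x) = d x := by
    intro x hx
    have := heqON hx
    rw [hY_def, hy_def, Prod.ext_iff, Prod.ext_iff] at this
    exact this.2.2
  have hchg : ∀ c ∈ Icc (-2:ℝ) 2, (∫ z in (0:ℝ)..(G c), dn z ^ 2)
      = ∫ x in (0:ℝ)..c, Real.sqrt (1 - k ^ 2 * Real.sin x ^ 2) := by
    intro c hc
    have h := intervalIntegral.integral_comp_smul_deriv (f := G) (f' := w)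
      (g := fun z => dn z ^ 2) (a := 0) (b := c)
      (fun x _ => hG' x) hw_cont.continuousOn (by fun_prop)
    rw [hG0] at h
    rw [← h]
    apply intervalIntegral.integral_congr
    intro x hx
    have hxI : x ∈ Icc (-2:ℝ) 2 := by
      have hsub : Set.uIcc (0:ℝ) c ⊆ Icc (-2:ℝ) 2 := by
        apply Set.uIcc_subset_Icc ⟨by norm_num, by norm_num⟩ hc
      exact hsub hx
    simp only [Function.comp, smul_eq_mul]
    rw [hdnG x hxI, hd_def, hw_def]
    simp only []
    rw [Real.sq_sqrt (hu_pos x).le]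
    rw [one_div_mul_eq_div]; exact (div_eq_iff (Real.sqrt_pos.mpr (hu_pos x)).ne').mpr (Real.mul_self_sqrt (hu_pos x).le).symm
  have hEzK : (∫ z in (0:ℝ)..(ellipticK k), dn z ^ 2) = ellipticE k := by
    have := hchg (Real.pi / 2) hpi2
    rw [hGK] at this
    rw [this, ellipticE]
  have hEzKneg : (∫ z in (0:ℝ)..(-ellipticK k), dn z ^ 2) = -ellipticE k := by
    have := hchg (-(Real.pi / 2)) hpi2'
    rw [hGKneg] at this
    rw [this]
    have heven : ∀ x : ℝ, d (-x) = d x := by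
      intro x; rw [hd_def]; simp [Real.sin_neg]
    have h := even_integral_neg d heven (Real.pi / 2)
    rw [hd_def] at h
    simp only [] at h
    rw [h]
    rw [ellipticE]
  -- === antiderivative chunk ===
  set KE := ellipticK k with hKE_def
  set EE := ellipticE k with hEE_def
  set Ez : ℝ → ℝ := fun z => ∫ y in (0:ℝ)..z, dn y ^ 2 with hEz_def
  have hEz' : ∀ z, HasDerivAt Ez (dn z ^ 2) z := fun z =>
    intervalIntegral.integral_hasDerivAt_right ((hdn_cont.pow 2).intervalIntegrable _ _)
      ((hdn_cont.pow 2).stronglyMeasurableAtFilter _ _) (hdn_cont.pow 2).continuousAt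
  have hEzc : Continuous Ez := continuous_iff_continuousAt.2 fun z => (hEz' z).continuousAt
  set F : ℝ → ℝ := fun z => (-((KE * Ez z - EE * z) * dn z ^ 2)
      + k ^ 2 * KE * (sn z * cn z * dn z) - EE * Ez z + KE * (1 - k ^ 2) * z) / (2 * k ^ 2)
      with hF_def
  have hk2ne : (2 * k ^ 2 : ℝ) ≠ 0 := by positivity
  have hF' : ∀ z, HasDerivAt F (φ z * (sn z * cn z)) z := by
    intro z
    have hA : HasDerivAt (fun z => KE * Ez z - EE * z) (KE * dn z ^ 2 - EE) z := by
      have := ((hEz' z).const_mul KE).sub ((hasDerivAt_id z).const_mul EE)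
      exact this.congr_deriv (by ring)
    have hdn2 : HasDerivAt (fun z => dn z ^ 2) (2 * dn z * -(k ^ 2 * sn z * cn z)) z := by
      have := (hdn' z).pow 2
      exact this.congr_deriv (by ring)
    have hscd : HasDerivAt (fun z => sn z * cn z * dn z)
        ((cn z * dn z) * cn z * dn z + sn z * -(sn z * dn z) * dn z
          + sn z * cn z * -(k ^ 2 * sn z * cn z)) z := by
      have := ((hsn' z).mul (hcn' z)).mul (hdn' z)
      exact this.congr_deriv (by simp only [Pi.mul_apply]; ring)
    have h := (((((hA.mul hdn2).neg).add
        (hscd.const_mul (k ^ 2 * KE))).sub ((hEz' z).const_mul EE)).add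
        ((hasDerivAt_id z).const_mul (KE * (1 - k ^ 2)))).div_const (2 * k ^ 2)
    have hFd : HasDerivAt F ((-((KE * dn z ^ 2 - EE) * dn z ^ 2
        + (KE * Ez z - EE * z) * (2 * dn z * -(k ^ 2 * sn z * cn z)))
        + k ^ 2 * KE * ((cn z * dn z) * cn z * dn z + sn z * -(sn z * dn z) * dn z
          + sn z * cn z * -(k ^ 2 * sn z * cn z))
        - EE * dn z ^ 2 + KE * (1 - k ^ 2) * 1) / (2 * k ^ 2)) z := by
      rw [hF_def]
      exact h
    convert hFd using 1
    have hphiz : φ z = (KE * Ez z - EE * z) * dn z - k ^ 2 * KE * sn z * cn z := hφ z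
    rw [hphiz, eq_div_iff hk2ne]
    have h1 := hsc z
    have h2 := hds z
    linear_combination (-(KE * k ^ 2)) * h1 + (KE + KE * dn z ^ 2 - KE * k ^ 2 * cn z ^ 2) * h2
  have hφ_cont : Continuous φ := by
    have : φ = fun z => (KE * Ez z - EE * z) * dn z - k ^ 2 * KE * sn z * cn z := by
      funext z; exact hφ z
    rw [this]
    exact (((continuous_const.mul hEzc).sub (continuous_const.mul continuous_id)).mul
      hdn_cont).sub ((continuous_const.mul hsn_cont).mul hcn_cont)
  have hInt : (∫ z in (-KE)..KE, φ z * (sn z * cn z)) = F KE - F (-KE) := by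
    exact intervalIntegral.integral_eq_sub_of_hasDerivAt (fun z _ => hF' z)
      ((hφ_cont.mul (hsn_cont.mul hcn_cont)).intervalIntegrable _ _)
  have hEzK2 : Ez KE = EE := hEzK
  have hEzK2' : Ez (-KE) = -EE := hEzKneg
  have hIntVal : (∫ z in (-KE)..KE, φ z * (sn z * cn z))
      = -(1 / k ^ 2) * (EE ^ 2 + (k ^ 2 - 1) * KE ^ 2) := by
    rw [hInt, hF_def]
    simp only [hEzK2, hEzK2', hsnK, hcnK, hsnK', hcnK']
    have hk0' : (k:ℝ) ≠ 0 := hk0.ne'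
    field_simp
    ring
  -- === nonvanishing chunk ===
  have hKE_nonneg : 0 ≤ KE := by
    rw [hKE_def, ellipticK]
    apply intervalIntegral.integral_nonneg (by positivity)
    intro x _
    positivity
  have hstrict : Real.sqrt (1 - k ^ 2) * KE < EE := by
    have hlhs : Real.sqrt (1 - k ^ 2) * KE
        = ∫ θ in (0:ℝ)..(Real.pi/2), Real.sqrt (1 - k ^ 2) * w θ := by
      rw [intervalIntegral.integral_const_mul]
      rfl
    have hrhs : EE = ∫ θ in (0:ℝ)..(Real.pi/2), d (Real.pi/2 - θ) := by
      have h := intervalIntegral.integral_comp_sub_left (a := (0:ℝ)) (b := Real.pi/2)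
        d (Real.pi/2)
      simp only [sub_self, sub_zero] at h
      rw [h]
      rfl
    rw [hlhs, hrhs]
    apply intervalIntegral.integral_lt_integral_of_continuousOn_of_le_of_exists_lt
      (by positivity)
    · exact (continuous_const.mul hw_cont).continuousOn
    · exact (hd_cont.comp (continuous_const.sub continuous_id)).continuousOn
    · intro x _
      have hwx : w x = 1 / Real.sqrt (1 - k ^ 2 * Real.sin x ^ 2) := by rw [hw_def]
      have hdx : d (Real.pi/2 - x) = Real.sqrt (1 - k ^ 2 * Real.cos x ^ 2) := by
        rw [hd_def]
        simp only [Real.sin_pi_div_two_sub]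
      rw [hwx, hdx]
      rw [mul_one_div, div_le_iff₀ (Real.sqrt_pos.mpr (hu_pos x))]
      rw [← Real.sqrt_mul (by nlinarith only [mul_le_mul_of_nonneg_left (Real.cos_sq_le_one x) (sq_nonneg k), hk2] : (0:ℝ) ≤ 1 - k ^ 2 * Real.cos x ^ 2)]
      apply Real.sqrt_le_sqrt
      have hid := Real.sin_sq_add_cos_sq x
      have hexp : (1 - k ^ 2 * Real.cos x ^ 2) * (1 - k ^ 2 * Real.sin x ^ 2)
          = 1 - k ^ 2 + (k ^ 2 * Real.sin x * Real.cos x) ^ 2 := by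
        linear_combination (-(k ^ 2) - k ^ 4 * Real.sin x ^ 2 * Real.cos x ^ 2 + k ^ 4 * Real.sin x ^ 2 * Real.cos x ^ 2) * hid
      rw [hexp]
      linarith only [sq_nonneg (k ^ 2 * Real.sin x * Real.cos x)]
    · refine ⟨Real.pi/4, ⟨by positivity, by nlinarith only [Real.pi_pos]⟩, ?_⟩
      have hs2 : Real.sin (Real.pi/4) ^ 2 = 1/2 := by
        rw [Real.sin_pi_div_four]
        rw [div_pow, Real.sq_sqrt (by norm_num : (2:ℝ) ≥ 0)]
        norm_num
      have hc2 : Real.cos (Real.pi/4) ^ 2 = 1/2 := by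
        rw [Real.cos_pi_div_four]
        rw [div_pow, Real.sq_sqrt (by norm_num : (2:ℝ) ≥ 0)]
        norm_num
      have hwx : w (Real.pi/4) = 1 / Real.sqrt (1 - k ^ 2 * Real.sin (Real.pi/4) ^ 2) := by
        rw [hw_def]
      have hdx : d (Real.pi/2 - Real.pi/4) = Real.sqrt (1 - k ^ 2 * Real.cos (Real.pi/4) ^ 2) := by
        rw [hd_def]
        simp only [Real.sin_pi_div_two_sub]
      rw [hwx, hdx, hs2, hc2]
      rw [mul_one_div, div_lt_iff₀ (Real.sqrt_pos.mpr (by linarith only [hk2] : (0:ℝ) < 1 - k ^ 2 * (1/2)))]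
      rw [← Real.sqrt_mul (by linarith only [hk2] : (0:ℝ) ≤ 1 - k ^ 2 * (1/2))]
      apply Real.sqrt_lt_sqrt hk2.le
      nlinarith only [pow_pos hk0 4]
  have hpos : 0 < EE ^ 2 + (k ^ 2 - 1) * KE ^ 2 := by
    have := sq_ineq_aux EE KE (1 - k ^ 2) hk2.le hstrict hKE_nonneg
    linarith only [this]
  have hne : -(1 / k ^ 2) * (EE ^ 2 + (k ^ 2 - 1) * KE ^ 2) ≠ 0 := by
    have hk2pos : (0:ℝ) < 1 / k ^ 2 := by positivity
    exact ne_of_lt (mul_neg_of_neg_of_pos (neg_lt_zero.mpr hk2pos) hpos)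
  -- === no periodic solution chunk ===
  have hno : ¬ ∃ g : ℝ → ℝ, ContDiff ℝ 2 g ∧ (∀ z, g (z + 2 * ellipticK k) = g z) ∧
      ∀ z, Lp k dn g z = φ z := by
    rintro ⟨g, hg2, hgper, hLpg⟩
    have hgd : Differentiable ℝ g := hg2.differentiable (by norm_num)
    have h12 : ContDiff ℝ ((1 : WithTop ℕ∞) + 1) g := by
      convert hg2 using 2; norm_num
    have hg1 : ContDiff ℝ 1 (deriv g) := (contDiff_succ_iff_deriv.mp h12).2.2
    have hgd' : Differentiable ℝ (deriv g) := hg1.differentiable one_ne_zero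
    have hg'at : ∀ z, HasDerivAt g (deriv g z) z := fun z => (hgd z).hasDerivAt
    have hg''at : ∀ z, HasDerivAt (deriv g) (deriv (deriv g) z) z := fun z => (hgd' z).hasDerivAt
    have hh' : ∀ z, HasDerivAt (fun z => sn z * cn z) ((cn z ^ 2 - sn z ^ 2) * dn z) z := by
      intro z
      have := (hsn' z).mul (hcn' z)
      exact this.congr_deriv (by ring)
    have hh1' : ∀ z, HasDerivAt (fun z => (cn z ^ 2 - sn z ^ 2) * dn z)
        (-(sn z * cn z) * (6 * dn z ^ 2 + k ^ 2 - 2)) z := by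
      intro z
      have := (((hcn' z).pow 2).sub ((hsn' z).pow 2)).mul (hdn' z)
      refine this.congr_deriv (Eq.symm ?_); simp only [Pi.sub_apply, Pi.pow_apply]
      linear_combination (k ^ 2 * sn z * cn z) * hsc z + (-2 * sn z * cn z) * hds z
    set W : ℝ → ℝ := fun z => g z * ((cn z ^ 2 - sn z ^ 2) * dn z)
        - deriv g z * (sn z * cn z) with hW_def
    have hW' : ∀ z, HasDerivAt W (φ z * (sn z * cn z)) z := by
      intro z
      have h1 := (hg'at z).mul (hh1' z)
      have h2 := (hg''at z).mul (hh' z)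
      have h3 := h1.sub h2
      rw [hW_def]
      refine h3.congr_deriv (Eq.symm ?_)
      have hphi := hLpg z
      simp only [_root_.Lp] at hphi
      linear_combination (-(sn z * cn z)) * hphi
    have hWint : (∫ z in (-KE)..KE, φ z * (sn z * cn z)) = W KE - W (-KE) :=
      intervalIntegral.integral_eq_sub_of_hasDerivAt (fun z _ => hW' z)
        ((hφ_cont.mul (hsn_cont.mul hcn_cont)).intervalIntegrable _ _)
    have hgKK : g KE = g (-KE) := by
      have h := hgper (-KE)
      rw [show -KE + 2 * ellipticK k = KE by rw [← hKE_def]; ring] at h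
      exact h
    have hWzero : W KE - W (-KE) = 0 := by
      rw [hW_def]
      simp only [hsnK, hcnK, hsnK', hcnK', hdnK, hdnK']
      rw [hgKK]
      ring
    rw [hWint, hWzero] at hIntVal
    exact hne hIntVal.symm
  refine ⟨hIntVal, ?_, hno⟩
  rw [hIntVal]
  exact hne
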